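/- The breakpoint distance between two permutations of {1,...,n} is zero if and only if the two permutations are equal or one is the reverse of the other. -/

import Mathlib

/-- `l` is a permutation of `{1,…,n}` viewed as a sequence. -/
def IsPermSeq (n : ℕ) (l : List ℕ) : Prop :=
  l.Nodup ∧ l.toFinset = Finset.Icc 1 n

/-- The set of unordered adjacencies `{l[i], l[i+1]}` of a sequence `l`. -/
def adjSet (l : List ℕ) : Finset (Sym2 ℕ) :=
  ((l.zip l.tail).map fun p => Sym2.mk p.1 p.2).toFinset

/-- Breakpoint distance: `|Adj(p) \ Adj(q)|`. -/
def dBP (p q : List ℕ) : ℕ := (adjSet p \ adjSet q).card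

lemma adjSet_cons₂ (a b : ℕ) (t : List ℕ) :
    adjSet (a :: b :: t) = insert s(a,b) (adjSet (b :: t)) := by
  simp [adjSet]

lemma mem_of_mem_adjSet {l : List ℕ} {e : Sym2 ℕ} (he : e ∈ adjSet l) {x : ℕ}
    (hx : x ∈ e) : x ∈ l := by
  induction l with
  | nil => simp [adjSet] at he
  | cons a t ih =>
    cases t with
    | nil => simp [adjSet] at he
    | cons b s =>
      rw [adjSet_cons₂] at he
      rcases Finset.mem_insert.mp he with h | h
      · subst h
        rcases Sym2.mem_iff.mp hx with rfl | rfl <;> simp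
      · exact List.mem_cons_of_mem a (ih h)

lemma adjSet_cons_subset (a : ℕ) (t : List ℕ) : adjSet t ⊆ adjSet (a :: t) := by
  cases t with
  | nil => simp [adjSet]
  | cons b s => rw [adjSet_cons₂]; exact Finset.subset_insert _ _

lemma adjSet_append_right (l₁ l₂ : List ℕ) : adjSet l₂ ⊆ adjSet (l₁ ++ l₂) := by
  induction l₁ with
  | nil => simp
  | cons a t ih => exact ih.trans (adjSet_cons_subset a (t ++ l₂))

lemma getLast_adj (l : List ℕ) (hl : l ≠ []) (a : ℕ) (r : List ℕ) :
    s(l.getLast hl, a) ∈ adjSet (l ++ a :: r) := by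
  induction l with
  | nil => simp at hl
  | cons x t ih =>
    cases t with
    | nil =>
      simp only [List.getLast_singleton, List.singleton_append]
      rw [adjSet_cons₂]; exact Finset.mem_insert_self _ _
    | cons y s =>
      rw [List.getLast_cons (by simp)]
      have := ih (by simp)
      rw [List.cons_append, List.cons_append] at *
      rw [adjSet_cons₂]
      exact Finset.mem_insert_of_mem (by simpa using this)

lemma card_adjSet {l : List ℕ} (hl : l.Nodup) : (adjSet l).card = l.length - 1 := by
  induction l with
  | nil => rfl
  | cons a t ih =>
    cases t with
    | nil => rfl
    | cons b s =>
      rw [adjSet_cons₂]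
      have hnotmem : s(a,b) ∉ adjSet (b :: s) := by
        intro h
        exact (List.nodup_cons.mp hl).1 (mem_of_mem_adjSet h (by simp))
      rw [Finset.card_insert_of_notMem hnotmem, ih (List.nodup_cons.mp hl).2]
      simp

lemma adjSet_concat : ∀ (l : List ℕ) (hl : l ≠ []) (a : ℕ),
    adjSet (l ++ [a]) = insert s(l.getLast hl, a) (adjSet l) := by
  intro l
  induction l with
  | nil => simp
  | cons x t ih =>
    intro _ a
    cases t with
    | nil => simp [adjSet_cons₂, adjSet]
    | cons y s =>
      rw [List.cons_append, List.cons_append] at *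
      rw [adjSet_cons₂, show y :: (s ++ [a]) = (y :: s) ++ [a] from rfl,
        ih (by simp) a, adjSet_cons₂, Finset.insert_comm]
      congr 2

lemma adjSet_reverse (l : List ℕ) : adjSet l.reverse = adjSet l := by
  induction l with
  | nil => rfl
  | cons a t ih =>
    cases t with
    | nil => rfl
    | cons b s =>
      have hne : (b :: s).reverse ≠ [] := by simp
      have h1 : (a :: b :: s).reverse = (b :: s).reverse ++ [a] := by simp
      rw [h1, adjSet_concat _ hne, ih, adjSet_cons₂]
      congr 1
      rw [List.getLast_reverse]
      exact Sym2.eq_swap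

-- unique edge at head
lemma edge_head {a : ℕ} {t : List ℕ} (hnd : (a :: t).Nodup) {e : Sym2 ℕ}
    (he : e ∈ adjSet (a :: t)) (ha : a ∈ e) :
    ∃ b s, t = b :: s ∧ e = s(a, b) := by
  cases t with
  | nil => simp [adjSet] at he
  | cons b s =>
    refine ⟨b, s, rfl, ?_⟩
    rw [adjSet_cons₂] at he
    rcases Finset.mem_insert.mp he with h | h
    · exact h
    · exact absurd (mem_of_mem_adjSet h ha) (List.nodup_cons.mp hnd).1

lemma adj_ext : ∀ (p q : List ℕ), p.Nodup → q.Nodup → p.length = q.length →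
    p.head? = q.head? → adjSet p = adjSet q → p = q := by
  intro p
  induction p with
  | nil => intro q _ _ hlen _ _; exact (List.length_eq_zero_iff.mp hlen.symm).symm
  | cons a t ih =>
    intro q hp hq hlen hhead hadj
    cases q with
    | nil => simp at hlen
    | cons c r =>
      have hac : a = c := by simpa using hhead
      subst hac
      cases t with
      | nil =>
        cases r with
        | nil => rfl
        | cons d r' => simp at hlen
      | cons b t' =>
        cases r with
        | nil => simp at hlen
        | cons d r' =>
          -- s(a,b) ∈ adjSet q, edge containing a at head of q → b = d
          have hmem : s(a,b) ∈ adjSet (a :: d :: r') := by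
            rw [← hadj, adjSet_cons₂]; exact Finset.mem_insert_self _ _
          obtain ⟨b', s', hds, heq⟩ := edge_head hq hmem (by simp)
          have hbd : b = d := by
            obtain ⟨hb', _⟩ := List.cons.injEq d r' b' s' ▸ hds
            have := Sym2.eq_iff.mp heq
            rcases this with ⟨_, h2⟩ | ⟨h1, h2⟩
            · rw [h2, hb']
            · exfalso; exact (List.nodup_cons.mp hp).1 (h2 ▸ List.mem_cons_self (a := b) (l := t'))
          subst hbd
          have hnp : s(a,b) ∉ adjSet (b :: t') := fun h =>
            (List.nodup_cons.mp hp).1 (mem_of_mem_adjSet h (by simp))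
          have hnq : s(a,b) ∉ adjSet (b :: r') := fun h =>
            (List.nodup_cons.mp hq).1 (mem_of_mem_adjSet h (by simp))
          have htails : adjSet (b :: t') = adjSet (b :: r') := by
            have h1 : adjSet (b :: t') = (adjSet (a :: b :: t')).erase s(a,b) := by
              rw [adjSet_cons₂, Finset.erase_insert hnp]
            have h2 : adjSet (b :: r') = (adjSet (a :: b :: r')).erase s(a,b) := by
              rw [adjSet_cons₂, Finset.erase_insert hnq]
            rw [h1, h2, hadj]
          have := ih (b :: r') (List.nodup_cons.mp hp).2 (List.nodup_cons.mp hq).2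
            (by simpa using hlen) rfl htails
          rw [this]


/-- The breakpoint distance between two permutations of `{1,…,n}` (`n ≥ 2`) is zero
iff the permutations are equal or one is the reverse of the other. -/
theorem dBP_eq_zero_iff (n : ℕ) (hn : 2 ≤ n) (p q : List ℕ)
    (hp : IsPermSeq n p) (hq : IsPermSeq n q) :
    dBP p q = 0 ↔ p = q ∨ p = q.reverse := by
  have hplen : p.length = n := by
    rw [← List.toFinset_card_of_nodup hp.1, hp.2, Nat.card_Icc]; omega
  have hqlen : q.length = n := by
    rw [← List.toFinset_card_of_nodup hq.1, hq.2, Nat.card_Icc]; omega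
  constructor
  · intro h0
    have hsub : adjSet p ⊆ adjSet q := by
      rw [← Finset.sdiff_eq_empty_iff_subset]
      exact Finset.card_eq_zero.mp h0
    have hadj : adjSet p = adjSet q := by
      apply Finset.eq_of_subset_of_card_le hsub
      rw [card_adjSet hp.1, card_adjSet hq.1, hplen, hqlen]
    clear hsub h0
    obtain ⟨a, p', rfl⟩ := List.exists_cons_of_ne_nil
      (show p ≠ [] by intro h; rw [h] at hplen; simp at hplen; omega)
    obtain ⟨b, t, rfl⟩ := List.exists_cons_of_ne_nil
      (show p' ≠ [] by intro h; rw [h] at hplen; simp at hplen; omega)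
    obtain ⟨c, r, rfl⟩ := List.exists_cons_of_ne_nil
      (show q ≠ [] by intro h; rw [h] at hqlen; simp at hqlen; omega)
    by_cases hac : a = c
    · left
      subst hac
      exact adj_ext _ _ hp.1 hq.1 (by omega) rfl hadj
    · by_cases halast : a = (c :: r).getLast (by simp)
      · right
        apply adj_ext _ _ hp.1 (List.nodup_reverse.mpr hq.1)
          (by rw [List.length_reverse]; omega)
        · rw [List.head?_reverse, List.getLast?_eq_getLast (l := c :: r) (by simp), ← halast]
          rfl
        · rw [adjSet_reverse]; exact hadj
      · exfalso
        -- a is an internal vertex of q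
        have haq : a ∈ c :: r := by
          have : a ∈ (a :: b :: t).toFinset := by simp
          rw [hp.2, ← hq.2] at this
          simpa using this
        obtain ⟨s1, s2, hqeq⟩ := List.append_of_mem haq
        have hs1ne : s1 ≠ [] := by
          rintro rfl
          simp at hqeq
          exact hac hqeq.1.symm
        have hs2ne : s2 ≠ [] := by
          rintro rfl
          apply halast
          have h1 : (c :: r).getLast? = some a := by
            rw [hqeq]; exact List.getLast?_concat
          rw [List.getLast?_eq_getLast (l := c :: r) (by simp)] at h1
          exact (Option.some_injective _ h1).symm
        obtain ⟨d, s2', rfl⟩ := List.exists_cons_of_ne_nil hs2ne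
        -- two distinct edges of q contain a
        have he1 : s(s1.getLast hs1ne, a) ∈ adjSet (c :: r) := by
          rw [hqeq]; exact getLast_adj _ _ _ _
        have he2 : s(a, d) ∈ adjSet (c :: r) := by
          rw [hqeq]
          apply adjSet_append_right s1 (a :: d :: s2')
          rw [adjSet_cons₂]; exact Finset.mem_insert_self _ _
        rw [← hadj] at he1 he2
        obtain ⟨b1, t1, ht1, heq1⟩ := edge_head hp.1 he1 (by simp)
        obtain ⟨b2, t2, ht2, heq2⟩ := edge_head hp.1 he2 (by simp)
        have hb1 : b1 = b := by injection ht1 with h _; exact h.symm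
        have hb2 : b2 = b := by injection ht2 with h _; exact h.symm
        rw [hb1] at heq1
        rw [hb2] at heq2
        have hnd := hq.1
        rw [hqeq] at hnd
        have hdisj : ∀ ⦃x⦄, x ∈ s1 → x ∈ a :: d :: s2' → False :=
          fun x hx1 hx2 => (List.nodup_append.mp hnd).2.2 x hx1 x hx2 rfl
        have hlb : s1.getLast hs1ne = b := by
          rcases Sym2.eq_iff.mp heq1 with ⟨h1, h2⟩ | ⟨h1, h2⟩
          · exact absurd (List.mem_cons_self (a := a) (l := d :: s2'))
              (fun hmem => hdisj (h1 ▸ List.getLast_mem hs1ne) hmem)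
          · exact h1
        have hdb : d = b := by
          rcases Sym2.eq_iff.mp heq2 with ⟨h1, h2⟩ | ⟨h1, h2⟩
          · exact h2
          · exact absurd (h1 ▸ List.mem_cons_self (a := b) (l := t))
              (List.nodup_cons.mp hp.1).1
        exact hdisj (hlb ▸ List.getLast_mem hs1ne)
          (by rw [← hdb] at hlb ⊢; exact List.mem_cons_of_mem a (List.mem_cons_self (a := d) (l := s2')))
  · rintro (rfl | rfl)
    · simp [dBP]
    · simp [dBP, adjSet_reverse]
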